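/- If M is a matching of G and M* is a maximum matching, then the symmetric difference M Δ M* contains at least μ(G) − |M| vertex-disjoint augmenting paths with respect to M. -/

import Mathlib

open SimpleGraph

variable {V : Type*} [Fintype V] [DecidableEq V]

/-- `M` is a matching of `G`: a set of edges of `G` that pairwise do not share endpoints. -/
def IsMatching (G : SimpleGraph V) (M : Set (Sym2 V)) : Prop :=
  M ⊆ G.edgeSet ∧ ∀ v : V, ∀ e₁ ∈ M, ∀ e₂ ∈ M, v ∈ e₁ → v ∈ e₂ → e₁ = e₂

/-- A vertex is free if no matching edge covers it. -/
def IsFree (M : Set (Sym2 V)) (v : V) : Prop := ∀ e ∈ M, v ∉ e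

/-- An alternating path with respect to the matching `M`:
a (simple) path whose consecutive edges alternate membership in `M`. -/
def IsAltPath (M : Set (Sym2 V)) {G : SimpleGraph V} {a b : V} (p : G.Walk a b) : Prop :=
  p.IsPath ∧ List.Chain' (fun e₁ e₂ => (e₁ ∈ M ↔ e₂ ∉ M)) p.edges

/-- An augmenting path: an alternating path between two distinct free vertices,
starting and ending with non-matching edges. -/
def IsAugPath (M : Set (Sym2 V)) {G : SimpleGraph V} {a b : V} (p : G.Walk a b) : Prop :=
  IsAltPath M p ∧ IsFree M a ∧ IsFree M b ∧ a ≠ b ∧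
  (∀ e, p.edges.head? = some e → e ∉ M) ∧ (∀ e, p.edges.getLast? = some e → e ∉ M)

/-- μ(G): the maximum cardinality of a matching of `G`. -/
noncomputable def matchNum (G : SimpleGraph V) : ℕ :=
  sSup {n | ∃ M : Set (Sym2 V), IsMatching G M ∧ M.ncard = n}

set_option linter.unusedSectionVars false

namespace AugProof

variable {G : SimpleGraph V}

/-- parity flag -/
def par (n : ℕ) : Bool := n % 2 == 1

lemma par_succ (n : ℕ) : par (n + 1) = !(par n) := by
  rcases Nat.mod_two_eq_zero_or_one n with h | h <;>
    simp [par, Nat.add_mod, h]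

/-- edge type: `Tt M N true e` means `e ∈ M \ N`; `Tt M N false e` means `e ∈ N \ M`. -/
def Tt (M N : Set (Sym2 V)) (c : Bool) (e : Sym2 V) : Prop :=
  if c then e ∈ M ∧ e ∉ N else e ∈ N ∧ e ∉ M

lemma Tt_not_both {M N : Set (Sym2 V)} {c : Bool} {e : Sym2 V} :
    Tt M N c e → Tt M N (!c) e → False := by
  cases c <;> simp [Tt] <;> tauto

lemma Tt_symmDiff {M N : Set (Sym2 V)} {c : Bool} {e : Sym2 V} (h : Tt M N c e) :
    e ∈ symmDiff M N := by
  cases c <;> simp [Tt] at h <;> simp [Set.mem_symmDiff] <;> tauto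

lemma symmDiff_Tt {M N : Set (Sym2 V)} {e : Sym2 V} (h : e ∈ symmDiff M N) :
    Tt M N true e ∨ Tt M N false e := by
  simp [Set.mem_symmDiff] at h
  rcases h with h | h
  · exact Or.inl (by simp [Tt]; tauto)
  · exact Or.inr (by simp [Tt]; tauto)

lemma Tt_swap {M N : Set (Sym2 V)} {c : Bool} {e : Sym2 V} :
    Tt N M c e ↔ Tt M N (!c) e := by
  cases c <;> simp [Tt]

lemma Tt_unique {M N : Set (Sym2 V)} (hM : IsMatching G M) (hN : IsMatching G N)
    {c : Bool} {e f : Sym2 V} {v : V} (he : Tt M N c e) (hf : Tt M N c f)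
    (hve : v ∈ e) (hvf : v ∈ f) : e = f := by
  cases c
  · exact hN.2 v e (by simpa [Tt] using he.1) f (by simpa [Tt] using hf.1) hve hvf
  · exact hM.2 v e (by simpa [Tt] using he.1) f (by simpa [Tt] using hf.1) hve hvf

/-- Alternating edge list: positions of even index (from the start) have type `c`. -/
def AltL (M N : Set (Sym2 V)) : Bool → List (Sym2 V) → Prop
  | _, [] => True
  | c, e :: l => Tt M N c e ∧ AltL M N (!c) l

lemma altL_snoc (M N : Set (Sym2 V)) :
    ∀ (l : List (Sym2 V)) (c : Bool) (e : Sym2 V),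
      AltL M N c (l ++ [e]) ↔ AltL M N c l ∧ Tt M N (c ^^ par l.length) e
  | [], c, e => by simp [AltL, par]
  | f :: l, c, e => by
    rw [List.cons_append]
    show Tt M N c f ∧ AltL M N (!c) (l ++ [e]) ↔ _
    rw [altL_snoc M N l (!c) e]
    show _ ↔ (Tt M N c f ∧ AltL M N (!c) l) ∧ _
    rw [List.length_cons, par_succ]
    cases c <;> cases hp : par l.length <;> simp [hp] <;> tauto

lemma altL_mem {M N : Set (Sym2 V)} :
    ∀ (l : List (Sym2 V)) (c : Bool), AltL M N c l → ∀ e ∈ l, e ∈ symmDiff M N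
  | [], _, _ => by simp
  | f :: l, c, h => by
    intro e he
    rcases List.mem_cons.mp he with rfl | he
    · exact Tt_symmDiff h.1
    · exact altL_mem l (!c) h.2 e he

lemma altL_getLast {M N : Set (Sym2 V)} :
    ∀ (l : List (Sym2 V)) (c : Bool) (e : Sym2 V), AltL M N c l →
      l.getLast? = some e → Tt M N (c ^^ !(par l.length)) e
  | [], _, _, _ => by simp
  | [f], c, e, h => by
    intro hl
    simp at hl
    subst hl
    simpa [par] using h.1
  | f :: g :: l, c, e, h => by
    intro hl
    have := altL_getLast (g :: l) (!c) e h.2 (by simpa using hl)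
    have hpar : par (f :: g :: l).length = !(par (g :: l).length) := by
      simp only [List.length_cons] at *
      exact par_succ _
    rw [hpar]
    cases c <;> cases hp : par (g :: l).length <;> simp_all

lemma altL_reverse {M N : Set (Sym2 V)} :
    ∀ (l : List (Sym2 V)) (c : Bool), AltL M N c l →
      AltL N M (c ^^ par l.length) l.reverse
  | [], c, h => by simp [AltL]
  | f :: l, c, h => by
    have ih := altL_reverse l (!c) h.2
    have hcg : (c ^^ par (f :: l).length) = (!c ^^ par l.length) := by
      rw [List.length_cons, par_succ]; cases c <;> cases par l.length <;> rfl
    rw [List.reverse_cons, altL_snoc, hcg, List.length_reverse]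
    refine ⟨ih, ?_⟩
    have hx : ((!c ^^ par l.length) ^^ par l.length) = !c := by
      cases c <;> cases par l.length <;> rfl
    rw [hx, Tt_swap, Bool.not_not]
    exact h.1

lemma altL_chain {M : Set (Sym2 V)} (N : Set (Sym2 V)) :
    ∀ (l : List (Sym2 V)) (c : Bool), AltL M N c l →
      List.Chain' (fun e₁ e₂ => (e₁ ∈ M ↔ e₂ ∉ M)) l
  | [], _, _ => List.isChain_nil
  | [e], _, _ => List.isChain_singleton e
  | e₁ :: e₂ :: l, c, h => by
    simp only [List.Chain', List.isChain_cons_cons]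
    refine ⟨?_, altL_chain N (e₂ :: l) (!c) h.2⟩
    have h1 := h.1
    have h2 := h.2.1
    cases c <;> simp [Tt] at h1 h2 <;> tauto


variable {G : SimpleGraph V}

lemma Tt_mem_union {M N : Set (Sym2 V)} {c : Bool} {e : Sym2 V} (h : Tt M N c e) :
    e ∈ M ∨ e ∈ N := by
  cases c <;> simp [Tt] at h <;> tauto

lemma flag_aux (c : Bool) (n : ℕ) : ((!c) ^^ par n) = (c ^^ par (n + 1)) := by
  rw [par_succ]; cases c <;> cases par n <;> rfl

lemma getLast?_cons_ne {α : Type*} {l : List α} (h : l ≠ []) (a : α) :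
    (a :: l).getLast? = l.getLast? := by
  obtain ⟨b, l, rfl⟩ := List.exists_cons_of_ne_nil h
  exact List.getLast?_cons_cons

lemma start_ne_end {a x : V} (w : G.Walk a x) (hp : w.IsPath) (h : 0 < w.length) : a ≠ x := by
  cases w with
  | nil => simp at h
  | cons hadj p =>
    have := ((Walk.cons_isPath_iff hadj p).mp hp).2
    exact fun hax => this (hax ▸ p.end_mem_support)

lemma support_eq_start {a x : V} (w : G.Walk a x) (h : w.length = 0) :
    ∀ v ∈ w.support, v = a := by
  intro v hv
  have h1 : w.support.length = 1 := by rw [Walk.length_support, h]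
  obtain ⟨z, hz⟩ := List.length_eq_one_iff.mp h1
  rw [hz] at hv
  have ha := w.start_mem_support
  rw [hz] at ha
  simp at hv ha
  rw [hv, ha]

lemma head?_edges {a x : V} (w : G.Walk a x) {e : Sym2 V} (h : w.edges.head? = some e) :
    a ∈ e := by
  cases w with
  | nil => simp at h
  | cons hadj p =>
    simp [Walk.edges_cons] at h
    rw [← h]
    exact Sym2.mem_mk_left _ _

lemma getLast?_edges : ∀ {a x : V} (w : G.Walk a x) {e : Sym2 V},
    w.edges.getLast? = some e → x ∈ e
  | a, _, .nil, e => by simp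
  | a, x, .cons hadj p, e => by
    intro h
    cases hp : p.edges with
    | nil =>
      have hl : p.length = 0 := by rw [← Walk.length_edges, hp]; rfl
      have hx := Walk.eq_of_length_eq_zero hl
      rw [Walk.edges_cons, hp] at h
      simp at h
      rw [← h, ← hx]
      exact Sym2.mem_mk_right _ _
    | cons f l =>
      have hne : p.edges ≠ [] := by rw [hp]; simp
      rw [Walk.edges_cons, getLast?_cons_ne hne] at h
      exact getLast?_edges p h

lemma mem_edge_of_mem_support : ∀ {a x : V} (w : G.Walk a x), 0 < w.length →
    ∀ v ∈ w.support, ∃ g ∈ w.edges, v ∈ g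
  | a, _, .nil, h => by simp at h
  | a, x, .cons (v := b) hadj p, _ => by
    intro v hv
    rw [Walk.support_cons, List.mem_cons] at hv
    rcases hv with rfl | hv
    · exact ⟨s(v, b), by simp [Walk.edges_cons], Sym2.mem_mk_left _ _⟩
    · by_cases hl : 0 < p.length
      · obtain ⟨g, hg, hvg⟩ := mem_edge_of_mem_support p hl v hv
        exact ⟨g, by simp [Walk.edges_cons, hg], hvg⟩
      · have h0 : p.length = 0 := by omega
        have := support_eq_start p h0 v hv
        subst this
        exact ⟨s(a, v), by simp [Walk.edges_cons], Sym2.mem_mk_right _ _⟩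

lemma path_end_edge : ∀ {a x : V} (w : G.Walk a x), w.IsPath →
    ∀ f ∈ w.edges, x ∈ f → w.edges.getLast? = some f
  | a, _, .nil, _ => by simp
  | a, x, .cons (v := b) hadj p, hp => by
    intro f hf hxf
    have hpp := (Walk.cons_isPath_iff hadj p).mp hp
    by_cases hl : 0 < p.length
    · have hne : p.edges ≠ [] := by
        intro h; rw [← Walk.length_edges, h] at hl; simp at hl
      rw [Walk.edges_cons, getLast?_cons_ne hne]
      rw [Walk.edges_cons, List.mem_cons] at hf
      rcases hf with rfl | hf
      · exfalso
        have hxa : x ≠ a := fun h => hpp.2 (h ▸ p.end_mem_support)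
        have hxb : x ≠ b := fun h => (start_ne_end p hpp.1 hl) h.symm
        rw [Sym2.mem_iff] at hxf
        tauto
      · exact path_end_edge p hpp.1 f hf hxf
    · have h0 : p.length = 0 := by omega
      have hpe : p.edges = [] := by
        have := Walk.length_edges p; rw [h0] at this; exact List.length_eq_zero_iff.mp this
      rw [Walk.edges_cons, hpe] at hf ⊢
      simp at hf
      simp [hf]

lemma closure {M N : Set (Sym2 V)} (hM : IsMatching G M) (hN : IsMatching G N) :
    ∀ {a x : V} (w : G.Walk a x) (c : Bool), AltL M N c w.edges →
      ∀ v ∈ w.support, ∀ f, f ∈ symmDiff M N → v ∈ f →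
        f ∈ w.edges ∨ (v = a ∧ Tt M N (!c) f) ∨ (v = x ∧ Tt M N (c ^^ par w.length) f)
  | a, _, .nil, c, hAlt => by
    intro v hv f hf hvf
    simp [Walk.support_nil] at hv
    subst hv
    rcases symmDiff_Tt hf with ht | ht <;> cases c <;>
      simp [Walk.length_nil, par] <;> tauto
  | a, x, .cons (v := b) hadj p, c, hAlt => by
    intro v hv f hf hvf
    have he0 : Tt M N c s(a, b) := hAlt.1
    have hAp : AltL M N (!c) p.edges := hAlt.2
    rw [Walk.support_cons, List.mem_cons] at hv
    rcases hv with rfl | hv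
    · rcases symmDiff_Tt hf with ht | ht
      · by_cases hc : c = true
        · subst hc
          exact Or.inl (by rw [Tt_unique hM hN ht he0 hvf (Sym2.mem_mk_left _ _)]; simp [Walk.edges_cons])
        · have hc' : c = false := by simpa using hc
          subst hc'
          exact Or.inr (Or.inl ⟨rfl, ht⟩)
      · by_cases hc : c = true
        · subst hc
          exact Or.inr (Or.inl ⟨rfl, ht⟩)
        · have hc' : c = false := by simpa using hc
          subst hc'
          exact Or.inl (by rw [Tt_unique hM hN ht he0 hvf (Sym2.mem_mk_left _ _)]; simp [Walk.edges_cons])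
    · rcases closure hM hN p (!c) hAp v hv f hf hvf with h | ⟨rfl, hT⟩ | ⟨rfl, hT⟩
      · exact Or.inl (by simp [Walk.edges_cons]; tauto)
      · rw [Bool.not_not] at hT
        exact Or.inl (by rw [Tt_unique hM hN hT he0 hvf (Sym2.mem_mk_right _ _)]; simp [Walk.edges_cons])
      · refine Or.inr (Or.inr ⟨rfl, ?_⟩)
        rw [Walk.length_cons, ← flag_aux]
        exact hT

/-- `Stuck M N c x`: no edge of type `c` is incident to `x`. -/
def Stuck (M N : Set (Sym2 V)) (c : Bool) (x : V) : Prop := ∀ f, Tt M N c f → x ∉ f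

/-- A maximal alternating walk. -/
def TermC (M N : Set (Sym2 V)) {a x : V} (w : G.Walk a x) (c : Bool) : Prop :=
  AltL M N c w.edges ∧ Stuck M N (c ^^ par w.length) x

lemma termC_unique {M N : Set (Sym2 V)} (hM : IsMatching G M) (hN : IsMatching G N) :
    ∀ {a x : V} (w : G.Walk a x) {x' : V} (w' : G.Walk a x') (c : Bool),
      TermC M N w c → TermC M N w' c →
      (⟨x, w⟩ : Σ y, G.Walk a y) = ⟨x', w'⟩ := by
  intro a x w
  induction w with
  | nil =>
    intro x' w' c hw hw'
    cases w' with
    | nil => rfl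
    | cons h' p' =>
      exfalso
      have hst := hw.2
      rw [Walk.length_nil, show (c ^^ par 0) = c by simp [par]] at hst
      exact hst _ hw'.1.1 (Sym2.mem_mk_left _ _)
  | cons h p ih =>
    intro x' w' c hw hw'
    cases w' with
    | nil =>
      exfalso
      have hst := hw'.2
      rw [Walk.length_nil, show (c ^^ par 0) = c by simp [par]] at hst
      exact hst _ hw.1.1 (Sym2.mem_mk_left _ _)
    | cons h' p' =>
      obtain rfl := Sym2.congr_right.mp
        (Tt_unique hM hN hw.1.1 hw'.1.1 (Sym2.mem_mk_left _ _) (Sym2.mem_mk_left _ _))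
      have hw2 : TermC M N p (!c) :=
        ⟨hw.1.2, by rw [flag_aux]; simpa [Walk.length_cons] using hw.2⟩
      have hw2' : TermC M N p' (!c) :=
        ⟨hw'.1.2, by rw [flag_aux]; simpa [Walk.length_cons] using hw'.2⟩
      have key := ih p' (!c) hw2 hw2'
      cases key
      rfl


variable {G : SimpleGraph V}

lemma isPath_concat {a x y : V} {w : G.Walk a x} (hp : w.IsPath) (hadj : G.Adj x y)
    (hy : y ∉ w.support) : (w.concat hadj).IsPath := by
  rw [← Walk.isPath_reverse_iff, Walk.reverse_concat]
  refine Walk.IsPath.cons hp.reverse ?_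
  rw [Walk.support_reverse, List.mem_reverse]
  exact hy

lemma exists_term {M N : Set (Sym2 V)} (hM : IsMatching G M) (hN : IsMatching G N) :
    ∀ (n : ℕ) {b x : V} (w : G.Walk b x), AltL M N false w.edges → w.IsPath → IsFree M b →
      Fintype.card V ≤ w.length + n →
      ∃ (x' : V) (w' : G.Walk b x'), TermC M N w' false ∧ w'.IsPath := by
  intro n
  induction n with
  | zero =>
    intro b x w _ hp _ hcard
    exact absurd hp.length_lt (by omega)
  | succ n ih =>
    intro b x w hAlt hp hfree hcard
    by_cases hst : Stuck M N (false ^^ par w.length) x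
    · exact ⟨x, w, ⟨hAlt, hst⟩, hp⟩
    · rw [Stuck] at hst
      push_neg at hst
      obtain ⟨f, hTt, hxf⟩ := hst
      have hfy : s(x, Sym2.Mem.other' hxf) = f := Sym2.other_spec' hxf
      set y := Sym2.Mem.other' hxf with hy_def
      have hfG : f ∈ G.edgeSet := by
        rcases Tt_mem_union hTt with h | h
        · exact hM.1 h
        · exact hN.1 h
      have hadj : G.Adj x y := by
        rw [← SimpleGraph.mem_edgeSet, hfy]
        exact hfG
      have hy : y ∉ w.support := by
        intro hy
        rcases closure hM hN w false hAlt y hy f (Tt_symmDiff hTt)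
            (by rw [← hfy]; exact Sym2.mem_mk_right _ _) with hmem | ⟨rfl, hT2⟩ | ⟨heq, hT3⟩
        · have hlast := path_end_edge w hp f hmem hxf
          have hgl := altL_getLast w.edges false f hAlt hlast
          rw [Walk.length_edges] at hgl
          rw [Bool.false_xor] at hTt hgl
          exact Tt_not_both hTt hgl
        · have hT2' : f ∈ M ∧ f ∉ N := by simpa [Tt] using hT2
          exact hfree f hT2'.1 (by rw [← hfy]; exact Sym2.mem_mk_right _ _)
        · exact hadj.ne heq.symm
      have hAlt' : AltL M N false (w.concat hadj).edges := by
        rw [Walk.edges_concat, List.concat_eq_append, altL_snoc, Walk.length_edges]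
        exact ⟨hAlt, by rw [hfy, Bool.false_xor] at *; exact hTt⟩
      have hp' := isPath_concat hp hadj hy
      exact ih (w.concat hadj) hAlt' hp' hfree
        (by rw [Walk.length_concat]; omega)

lemma term_closure {M N : Set (Sym2 V)} (hM : IsMatching G M) (hN : IsMatching G N)
    {b x : V} {w : G.Walk b x} (ht : TermC M N w false) (hfree : IsFree M b) :
    ∀ v ∈ w.support, ∀ f, f ∈ symmDiff M N → v ∈ f → f ∈ w.edges := by
  intro v hv f hf hvf
  rcases closure hM hN w false ht.1 v hv f hf hvf with h | ⟨rfl, hT⟩ | ⟨rfl, hT⟩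
  · exact h
  · have hT' : f ∈ M ∧ f ∉ N := by simpa [Tt] using hT
    exact absurd hvf (hfree f hT'.1)
  · exact absurd hvf (ht.2 f hT)

lemma term_isAug {M N : Set (Sym2 V)} (hM : IsMatching G M) (hN : IsMatching G N)
    {b x : V} {w : G.Walk b x} (ht : TermC M N w false) (hp : w.IsPath)
    (hfree : IsFree M b) (hodd : par w.length = true) :
    IsAugPath M w ∧ IsFree M x := by
  have hlenpos : 0 < w.length := by
    rcases Nat.eq_zero_or_pos w.length with h | h
    · rw [h] at hodd; simp [par] at hodd
    · exact h
  have hne : w.edges ≠ [] := by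
    intro h
    have := Walk.length_edges w
    rw [h] at this
    simp at this
    omega
  obtain ⟨g, hg⟩ := Option.isSome_iff_exists.mp (List.getLast?_isSome.mpr hne)
  have hgT : Tt M N false g := by
    have hgl := altL_getLast w.edges false g ht.1 hg
    rw [Walk.length_edges, hodd] at hgl
    simpa using hgl
  have hgT' : g ∈ N ∧ g ∉ M := by simpa [Tt] using hgT
  have hxg : x ∈ g := getLast?_edges w hg
  have hstT : Stuck M N true x := by
    have := ht.2
    rwa [Bool.false_xor, hodd] at this
  have hfreex : IsFree M x := by
    intro f hfM hxf
    by_cases hfN : f ∈ N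
    · have heq : f = g := hN.2 x f hfN g hgT'.1 hxf hxg
      exact hgT'.2 (heq ▸ hfM)
    · exact hstT f (by simp [Tt]; exact ⟨hfM, hfN⟩) hxf
  refine ⟨⟨⟨hp, altL_chain N w.edges false ht.1⟩, hfree, hfreex,
    start_ne_end w hp hlenpos, ?_, ?_⟩, hfreex⟩
  · intro e he
    obtain ⟨e0, l0, hel⟩ := List.exists_cons_of_ne_nil hne
    rw [hel] at he
    simp at he
    subst he
    have h0 : Tt M N false e0 := by
      have := ht.1
      rw [hel] at this
      exact this.1
    exact (by simpa [Tt] using h0 : e0 ∈ N ∧ e0 ∉ M).2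
  · intro e he
    rw [hg] at he
    injection he with he
    exact he ▸ hgT'.2


variable {G : SimpleGraph V}

/-- Vertices covered by an edge set. -/
def covered (P : Set (Sym2 V)) : Set V := {v | ∃ e ∈ P, v ∈ e}

lemma not_isFree_iff {P : Set (Sym2 V)} {v : V} : ¬ IsFree P v ↔ v ∈ covered P := by
  simp [IsFree, covered]

lemma covered_ncard : ∀ (n : ℕ) (P : Set (Sym2 V)), P ⊆ G.edgeSet →
    (∀ v : V, ∀ e₁ ∈ P, ∀ e₂ ∈ P, v ∈ e₁ → v ∈ e₂ → e₁ = e₂) → P.ncard = n →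
    (covered P).ncard = 2 * n := by
  intro n
  induction n with
  | zero =>
    intro P _ _ hc
    have : P = ∅ := (Set.ncard_eq_zero (Set.toFinite P)).mp hc
    subst this
    simp [covered]
  | succ n ih =>
    intro P hPG hPm hc
    have hne : P.Nonempty := by
      rw [← Set.ncard_pos (Set.toFinite P), hc]; omega
    obtain ⟨e, he⟩ := hne
    induction e using Sym2.ind with
    | _ a b =>
    have hab : a ≠ b := by
      intro h
      have := hPG he
      rw [h] at this
      exact (G.irrefl ((SimpleGraph.mem_edgeSet G).mp this))
    have hrec := ih (P \ {s(a, b)}) (fun e h => hPG h.1)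
      (fun v e₁ h₁ e₂ h₂ hv₁ hv₂ => hPm v e₁ h₁.1 e₂ h₂.1 hv₁ hv₂)
      (by rw [Set.ncard_diff_singleton_of_mem he, hc]; rfl)
    have hcov : covered P = {a, b} ∪ covered (P \ {s(a, b)}) := by
      ext v
      simp only [covered, Set.mem_setOf_eq, Set.mem_union, Set.mem_insert_iff,
        Set.mem_singleton_iff, Set.mem_diff]
      constructor
      · rintro ⟨f, hf, hvf⟩
        by_cases hfe : f = s(a, b)
        · subst hfe
          rw [Sym2.mem_iff] at hvf
          tauto
        · exact Or.inr ⟨f, ⟨hf, hfe⟩, hvf⟩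
      · rintro ((hv | hv) | ⟨f, hf, hvf⟩)
        · exact ⟨s(a, b), he, by rw [hv]; exact Sym2.mem_mk_left _ _⟩
        · exact ⟨s(a, b), he, by rw [hv]; exact Sym2.mem_mk_right _ _⟩
        · exact ⟨f, hf.1, hvf⟩
    have hdisj : Disjoint ({a, b} : Set V) (covered (P \ {s(a, b)})) := by
      rw [Set.disjoint_left]
      rintro v (hv | hv) ⟨f, hf, hvf⟩
      · exact hf.2 (hPm v f hf.1 s(a, b) he hvf (by rw [hv]; exact Sym2.mem_mk_left _ _))
      · exact hf.2 (hPm v f hf.1 s(a, b) he hvf (by rw [hv]; exact Sym2.mem_mk_right _ _))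
    rw [hcov, Set.ncard_union_eq hdisj (Set.toFinite _) (Set.toFinite _),
      Set.ncard_pair hab, hrec]
    ring

lemma free_count {M N : Set (Sym2 V)} (hM : IsMatching G M) (hN : IsMatching G N)
    (hlt : M.ncard < N.ncard) :
    {v | IsFree N v ∧ ¬ IsFree M v}.ncard < {v | IsFree M v ∧ ¬ IsFree N v}.ncard := by
  have hcM := covered_ncard M.ncard M hM.1 hM.2 rfl
  have hcN := covered_ncard N.ncard N hN.1 hN.2 rfl
  have hSet1 : {v | IsFree M v ∧ ¬ IsFree N v} = covered N \ covered M := by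
    ext v
    simp only [Set.mem_setOf_eq, Set.mem_diff, ← not_isFree_iff]
    tauto
  have hSet2 : {v | IsFree N v ∧ ¬ IsFree M v} = covered M \ covered N := by
    ext v
    simp only [Set.mem_setOf_eq, Set.mem_diff, ← not_isFree_iff]
    tauto
  have h1 : (covered N \ covered M).ncard + (covered N ∩ covered M).ncard
      = (covered N).ncard := by
    rw [← Set.ncard_union_eq (Set.disjoint_of_subset_right Set.inter_subset_right
      Set.disjoint_sdiff_left) (Set.toFinite _) (Set.toFinite _), Set.diff_union_inter]
  have h2 : (covered M \ covered N).ncard + (covered M ∩ covered N).ncard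
      = (covered M).ncard := by
    rw [← Set.ncard_union_eq (Set.disjoint_of_subset_right Set.inter_subset_right
      Set.disjoint_sdiff_left) (Set.toFinite _) (Set.toFinite _), Set.diff_union_inter]
  rw [hSet1, hSet2]
  rw [Set.inter_comm (covered N) (covered M)] at h1
  omega

/-- Berge: if `|M| < |N|` there is a good (odd-length) terminal walk. -/
lemma berge {M N : Set (Sym2 V)} (hM : IsMatching G M) (hN : IsMatching G N)
    (hlt : M.ncard < N.ncard) :
    ∃ (b x : V) (w : G.Walk b x), TermC M N w false ∧ w.IsPath ∧ IsFree M b ∧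
      par w.length = true := by
  by_contra hno
  push_neg at hno
  set Sset := {v | IsFree M v ∧ ¬ IsFree N v} with hS_def
  set Tset := {v | IsFree N v ∧ ¬ IsFree M v} with hT_def
  have hcount := free_count hM hN hlt
  rw [← hS_def, ← hT_def] at hcount
  have key : ∀ b : V, ∃ (x : V) (w : G.Walk b x),
      b ∈ Sset → TermC M N w false ∧ w.IsPath ∧ 0 < w.length := by
    intro b
    by_cases hb : b ∈ Sset
    · obtain ⟨x, w, hterm, hpath⟩ := exists_term hM hN (Fintype.card V)
        (Walk.nil : G.Walk b b) (by simp [AltL]) (by simp) hb.1 (by simp)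
      refine ⟨x, w, fun _ => ⟨hterm, hpath, ?_⟩⟩
      rcases Nat.eq_zero_or_pos w.length with h0 | h0
      · exfalso
        have hbx : b = x := Walk.eq_of_length_eq_zero h0
        have hst := hterm.2
        rw [h0, show (false ^^ par 0) = false by simp [par]] at hst
        -- b has an N-edge; it is in N \ M since b is M-free
        have : ¬ IsFree N b := hb.2
        rw [not_isFree_iff] at this
        obtain ⟨f, hfN, hbf⟩ := this
        have hfNM : Tt M N false f := by
          simp only [Tt, if_false]
          exact ⟨hfN, fun hfM => hb.1 f hfM hbf⟩
        exact hst f hfNM (hbx ▸ hbf)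
      · exact h0
    · exact ⟨b, Walk.nil, fun h => absurd h hb⟩
  choose xf wf hkey using key
  have hbad : ∀ b ∈ Sset, par (wf b).length = false := by
    intro b hb
    have h := hkey b hb
    have := hno b (xf b) (wf b) h.1 h.2.1 hb.1
    simpa using this
  have hmap : ∀ b ∈ Sset, xf b ∈ Tset := by
    intro b hb
    obtain ⟨hterm, hpath, hpos⟩ := hkey b hb
    have hne : (wf b).edges ≠ [] := by
      intro h
      have := Walk.length_edges (wf b)
      rw [h] at this
      simp at this
      omega
    obtain ⟨g, hg⟩ := Option.isSome_iff_exists.mp (List.getLast?_isSome.mpr hne)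
    have hgT : Tt M N true g := by
      have hgl := altL_getLast (wf b).edges false g hterm.1 hg
      rw [Walk.length_edges, hbad b hb] at hgl
      simpa using hgl
    have hgT' : g ∈ M ∧ g ∉ N := by simpa [Tt] using hgT
    have hxg : xf b ∈ g := getLast?_edges (wf b) hg
    have hstF : Stuck M N false (xf b) := by
      have := hterm.2
      rwa [Bool.false_xor, hbad b hb] at this
    constructor
    · -- IsFree N (xf b)
      intro f hfN hxf
      by_cases hfM : f ∈ M
      · have heq : f = g := hM.2 (xf b) f hfM g hgT'.1 hxf hxg
        exact hgT'.2 (heq ▸ hfN)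
      · exact hstF f (by simp only [Tt, if_false]; exact ⟨hfN, hfM⟩) hxf
    · -- ¬ IsFree M (xf b)
      rw [not_isFree_iff]
      exact ⟨g, hgT'.1, hxg⟩
  have hinj : Set.InjOn xf Sset := by
    intro b hb b' hb' hxx
    obtain ⟨hterm, hpath, hpos⟩ := hkey b hb
    obtain ⟨hterm', hpath', hpos'⟩ := hkey b' hb'
    have hrev : ∀ (c : V) (hc : c ∈ Sset), TermC N M (wf c).reverse false := by
      intro c hc
      obtain ⟨htc, hpc, hposc⟩ := hkey c hc
      constructor
      · rw [Walk.edges_reverse]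
        have := altL_reverse (wf c).edges false htc.1
        rwa [Walk.length_edges, hbad c hc] at this
      · rw [Walk.length_reverse, hbad c hc]
        intro f hTf hcf
        have hf' : f ∈ M ∧ f ∉ N := by simpa [Tt] using (Tt_swap.mp hTf)
        exact hc.1 f hf'.1 hcf
    have h1 := hrev b hb
    have h2 := hrev b' hb'
    -- transport h2 along hxx
    have key2 := termC_unique hN hM ((wf b).reverse)
      (((wf b').reverse).copy hxx.symm rfl) false h1
      (by
        constructor
        · rw [Walk.edges_copy]
          exact h2.1
        · rw [Walk.length_copy]
          exact h2.2)
    have := congrArg Sigma.fst key2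
    simpa using this
  have hle : Sset.ncard ≤ Tset.ncard := by
    rw [← Set.ncard_image_of_injOn hinj]
    exact Set.ncard_le_ncard (by rintro v ⟨b, hb, rfl⟩; exact hmap b hb) (Set.toFinite _)
  omega


variable {G : SimpleGraph V}

lemma mem_of_getLast?' {α : Type*} {l : List α} {a : α} (h : l.getLast? = some a) : a ∈ l := by
  obtain ⟨hne, heq⟩ := List.mem_getLast?_eq_getLast (show a ∈ l.getLast? from h)
  rw [heq]
  exact List.getLast_mem hne

lemma mem_support_of_mem_edges' {a x : V} (w : G.Walk a x) {e : Sym2 V} {v : V}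
    (he : e ∈ w.edges) (hv : v ∈ e) : v ∈ w.support := by
  have hspec : s(v, Sym2.Mem.other' hv) = e := Sym2.other_spec' hv
  exact w.fst_mem_support_of_mem_edges (by rw [hspec]; exact he)

lemma count_aug {M N : Set (Sym2 V)} :
    ∀ (l : List (Sym2 V)), AltL M N false l → l.Nodup → par l.length = true →
      ({e | e ∈ l} \ M).ncard = ({e | e ∈ l} ∩ M).ncard + 1
  | [] => by intro _ _ h; simp [par] at h
  | [e] => by
    intro h _ _
    have he : e ∈ N ∧ e ∉ M := by simpa [Tt] using h.1
    have h1 : ({f | f ∈ [e]} : Set (Sym2 V)) \ M = {e} := by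
      ext f; simp only [Set.mem_diff, Set.mem_setOf_eq, List.mem_singleton,
        Set.mem_singleton_iff]
      constructor
      · tauto
      · rintro rfl; exact ⟨rfl, he.2⟩
    have h2 : ({f | f ∈ [e]} : Set (Sym2 V)) ∩ M = ∅ := by
      ext f; simp only [Set.mem_inter_iff, Set.mem_setOf_eq, List.mem_singleton,
        Set.mem_empty_iff_false, iff_false, not_and]
      rintro rfl; exact he.2
    rw [h1, h2]
    simp
  | e₁ :: e₂ :: l => by
    intro h hnd hp
    have h1 : e₁ ∈ N ∧ e₁ ∉ M := by simpa [Tt] using h.1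
    have h2 : e₂ ∈ M ∧ e₂ ∉ N := by simpa [Tt] using h.2.1
    have hAl : AltL M N false l := by
      have := h.2.2
      rwa [Bool.not_not] at this
    have hp' : par l.length = true := by
      rw [List.length_cons, List.length_cons, par_succ, par_succ, Bool.not_not] at hp
      exact hp
    have ih := count_aug l hAl (hnd.of_cons.of_cons) hp'
    have hne1 : e₁ ∉ l := by
      have := hnd
      simp only [List.nodup_cons, List.mem_cons] at this
      tauto
    have hne2 : e₂ ∉ l := by
      have := hnd
      simp only [List.nodup_cons] at this
      exact fun hc => this.2.1 hc
    have hne12 : e₁ ≠ e₂ := by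
      have := hnd
      simp only [List.nodup_cons, List.mem_cons] at this
      tauto
    have hdiff : ({f | f ∈ e₁ :: e₂ :: l} : Set (Sym2 V)) \ M
        = insert e₁ ({f | f ∈ l} \ M) := by
      ext f
      simp only [Set.mem_diff, Set.mem_setOf_eq, List.mem_cons, Set.mem_insert_iff]
      constructor
      · rintro ⟨rfl | rfl | hf, hfM⟩
        · exact Or.inl rfl
        · exact absurd h2.1 hfM
        · exact Or.inr ⟨hf, hfM⟩
      · rintro (rfl | ⟨hf, hfM⟩)
        · exact ⟨Or.inl rfl, h1.2⟩
        · exact ⟨Or.inr (Or.inr hf), hfM⟩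
    have hinter : ({f | f ∈ e₁ :: e₂ :: l} : Set (Sym2 V)) ∩ M
        = insert e₂ ({f | f ∈ l} ∩ M) := by
      ext f
      simp only [Set.mem_inter_iff, Set.mem_setOf_eq, List.mem_cons, Set.mem_insert_iff]
      constructor
      · rintro ⟨rfl | rfl | hf, hfM⟩
        · exact absurd hfM h1.2
        · exact Or.inl rfl
        · exact Or.inr ⟨hf, hfM⟩
      · rintro (rfl | ⟨hf, hfM⟩)
        · exact ⟨Or.inr (Or.inl rfl), h2.1⟩
        · exact ⟨Or.inr (Or.inr hf), hfM⟩
    rw [hdiff, hinter,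
      Set.ncard_insert_of_notMem (fun hc => hne1 hc.1) (Set.toFinite _),
      Set.ncard_insert_of_notMem (fun hc => hne2 hc.1) (Set.toFinite _), ih]

lemma step {M N : Set (Sym2 V)} (hM : IsMatching G M) (hN : IsMatching G N)
    {b x : V} {w : G.Walk b x} (ht : TermC M N w false) (hp : w.IsPath)
    (hfree : IsFree M b) (hodd : par w.length = true) :
    IsMatching G (symmDiff M {e | e ∈ w.edges}) ∧
    (symmDiff M {e | e ∈ w.edges}).ncard = M.ncard + 1 ∧
    symmDiff (symmDiff M {e | e ∈ w.edges}) N = symmDiff M N \ {e | e ∈ w.edges} := by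
  set E := {e : Sym2 V | e ∈ w.edges} with hE
  have hEsym : ∀ e ∈ E, e ∈ symmDiff M N := fun e he => altL_mem w.edges false ht.1 e he
  have hclos := term_closure hM hN ht hfree
  have hpos : 0 < w.length := by
    have : w.length % 2 = 1 := by simpa [par] using hodd
    omega
  have hEN : ∀ e, e ∈ E → e ∉ M → e ∈ N := by
    intro e he hem
    rcases Set.mem_symmDiff.mp (hEsym e he) with h | h
    · exact absurd h.1 hem
    · exact h.1
  have hkey : ∀ v e, v ∈ w.support → v ∈ e → (e ∈ M ∨ e ∈ N) → e ∈ E := by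
    intro v e hvs hve heMN
    by_cases hd : e ∈ symmDiff M N
    · exact hclos v hvs e hd hve
    · exfalso
      rw [Set.mem_symmDiff] at hd
      push_neg at hd
      have heMN' : e ∈ M ∧ e ∈ N := by tauto
      obtain ⟨g, hg, hvg⟩ := mem_edge_of_mem_support w hpos v hvs
      rcases Set.mem_symmDiff.mp (hEsym g hg) with ⟨hgM, hgN⟩ | ⟨hgN, hgM⟩
      · have hge : g = e := hM.2 v g hgM e heMN'.1 hvg hve
        exact hgN (hge ▸ heMN'.2)
      · have hge : g = e := hN.2 v g hgN e heMN'.2 hvg hve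
        exact hgM (hge ▸ heMN'.1)
  refine ⟨⟨?_, ?_⟩, ?_, ?_⟩
  · intro e he
    rw [Set.mem_symmDiff] at he
    rcases he with ⟨heM, _⟩ | ⟨heE, _⟩
    · exact hM.1 heM
    · exact w.edges_subset_edgeSet heE
  · intro v e₁ he₁ e₂ he₂ hv₁ hv₂
    rw [Set.mem_symmDiff] at he₁ he₂
    rcases he₁ with ⟨h1M, h1E⟩ | ⟨h1E, h1M⟩ <;> rcases he₂ with ⟨h2M, h2E⟩ | ⟨h2E, h2M⟩
    · exact hM.2 v e₁ h1M e₂ h2M hv₁ hv₂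
    · exact absurd (hkey v e₁ (mem_support_of_mem_edges' w h2E hv₂) hv₁ (Or.inl h1M)) h1E
    · exact absurd (hkey v e₂ (mem_support_of_mem_edges' w h1E hv₁) hv₂ (Or.inl h2M)) h2E
    · exact hN.2 v e₁ (hEN e₁ h1E h1M) e₂ (hEN e₂ h2E h2M) hv₁ hv₂
  · have hcnt := count_aug w.edges ht.1 hp.edges_nodup (by rw [Walk.length_edges]; exact hodd)
    rw [← hE] at hcnt
    have hMsplit : (M \ E).ncard + (M ∩ E).ncard = M.ncard := by
      rw [← Set.ncard_union_eq (Set.disjoint_of_subset_right Set.inter_subset_right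
        Set.disjoint_sdiff_left) (Set.toFinite _) (Set.toFinite _), Set.diff_union_inter]
    have hdj : Disjoint (M \ E) (E \ M) := by
      rw [Set.disjoint_left]
      rintro e ⟨_, heE⟩ ⟨heE', _⟩
      exact heE heE'
    rw [Set.symmDiff_def, Set.ncard_union_eq hdj (Set.toFinite _) (Set.toFinite _)]
    rw [Set.inter_comm E M] at hcnt
    omega
  · ext e
    by_cases heE : e ∈ E
    · have hd := Set.mem_symmDiff.mp (hEsym e heE)
      simp only [Set.mem_symmDiff, Set.mem_diff]
      tauto
    · simp only [Set.mem_symmDiff, Set.mem_diff]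
      tauto

lemma chain_transfer {M M' : Set (Sym2 V)} :
    ∀ (l : List (Sym2 V)), (∀ e ∈ l, (e ∈ M' ↔ e ∈ M)) →
      List.Chain' (fun e₁ e₂ => (e₁ ∈ M' ↔ e₂ ∉ M')) l →
      List.Chain' (fun e₁ e₂ => (e₁ ∈ M ↔ e₂ ∉ M)) l
  | [] => fun _ _ => List.isChain_nil
  | [e] => fun _ _ => List.isChain_singleton e
  | e₁ :: e₂ :: l => fun hiff hch => by
    simp only [List.Chain', List.isChain_cons_cons] at hch ⊢
    refine ⟨?_, chain_transfer (e₂ :: l) (fun e he => hiff e (List.mem_cons_of_mem _ he)) hch.2⟩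
    have i1 := hiff e₁ (by simp)
    have i2 := hiff e₂ (by simp)
    have := hch.1
    tauto

lemma main {N : Set (Sym2 V)} (hN : IsMatching G N) :
    ∀ (d : ℕ) (M : Set (Sym2 V)), IsMatching G M → N.ncard ≤ M.ncard + d →
      ∃ (k : ℕ) (A : Fin k → (a : V) × (b : V) × G.Walk a b),
        N.ncard - M.ncard ≤ k ∧
        (∀ i, IsAugPath M (A i).2.2 ∧ ∀ e ∈ (A i).2.2.edges, e ∈ symmDiff M N) ∧
        (∀ i j, i ≠ j → ∀ v ∈ (A i).2.2.support, v ∉ (A j).2.2.support) := by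
  intro d
  induction d with
  | zero =>
    intro M hM hle
    exact ⟨0, fun i => i.elim0, by omega, fun i => i.elim0, fun i => i.elim0⟩
  | succ d ih =>
    intro M hM hle
    by_cases hcase : N.ncard ≤ M.ncard
    · exact ⟨0, fun i => i.elim0, by omega, fun i => i.elim0, fun i => i.elim0⟩
    · have hlt : M.ncard < N.ncard := by omega
      obtain ⟨b, x, w, hterm, hpath, hfree, hodd⟩ := berge hM hN hlt
      obtain ⟨hM', hcard', hsd⟩ := step hM hN hterm hpath hfree hodd
      set M' := symmDiff M {e | e ∈ w.edges} with hM'def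
      set E := {e : Sym2 V | e ∈ w.edges} with hEdef
      obtain ⟨k, A, hk, hprops, hdisj⟩ := ih M' hM' (by omega)
      obtain ⟨hwAug, hfreex⟩ := term_isAug hM hN hterm hpath hfree hodd
      have hwD : ∀ e ∈ w.edges, e ∈ symmDiff M N := altL_mem _ _ hterm.1
      have hclos := term_closure hM hN hterm hfree
      have htrans : ∀ i, IsAugPath M (A i).2.2 ∧ (∀ e ∈ (A i).2.2.edges, e ∈ symmDiff M N)
          ∧ (∀ v ∈ (A i).2.2.support, v ∉ w.support) := by
        intro i
        obtain ⟨hAug_i, hD_i⟩ := hprops i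
        have hpe : ∀ e ∈ (A i).2.2.edges, e ∈ symmDiff M N \ E := by
          intro e he
          have := hD_i e he
          rwa [hsd] at this
        have hpos : 0 < (A i).2.2.length := by
          rcases Nat.eq_zero_or_pos (A i).2.2.length with h0 | h0
          · exact absurd (Walk.eq_of_length_eq_zero h0) hAug_i.2.2.2.1
          · exact h0
        have hdisj_w : ∀ v ∈ (A i).2.2.support, v ∉ w.support := by
          intro v hv hvw
          obtain ⟨g, hg, hvg⟩ := mem_edge_of_mem_support (A i).2.2 hpos v hv
          have hg2 := hpe g hg
          exact hg2.2 (hclos v hvw g hg2.1 hvg)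
        have hiff : ∀ e ∈ (A i).2.2.edges, (e ∈ M' ↔ e ∈ M) := by
          intro e he
          have h2 := hpe e he
          rw [hM'def, Set.mem_symmDiff]
          have : e ∉ E := h2.2
          tauto
        refine ⟨?_, fun e he => (hpe e he).1, hdisj_w⟩
        obtain ⟨⟨hp_path, hp_chain⟩, hfa, hfb, hne, hhead, hlast⟩ := hAug_i
        refine ⟨⟨hp_path, chain_transfer (A i).2.2.edges hiff hp_chain⟩, ?_, ?_, hne, ?_, ?_⟩
        · intro f hfM haf
          by_cases hfE : f ∈ E
          · exact hdisj_w _ (A i).2.2.start_mem_support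
              (mem_support_of_mem_edges' w hfE haf)
          · exact hfa f (Set.mem_symmDiff.mpr (Or.inl ⟨hfM, hfE⟩)) haf
        · intro f hfM hbf
          by_cases hfE : f ∈ E
          · exact hdisj_w _ (A i).2.2.end_mem_support
              (mem_support_of_mem_edges' w hfE hbf)
          · exact hfb f (Set.mem_symmDiff.mpr (Or.inl ⟨hfM, hfE⟩)) hbf
        · intro e hh heM
          exact hhead e hh ((hiff e (List.mem_of_mem_head? hh)).mpr heM)
        · intro e hh heM
          exact hlast e hh ((hiff e (mem_of_getLast?' hh)).mpr heM)
      refine ⟨k + 1, Fin.cons ⟨b, x, w⟩ A, by omega, ?_, ?_⟩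
      · intro i
        refine Fin.cases ?_ (fun i' => ?_) i
        · exact ⟨hwAug, hwD⟩
        · exact ⟨(htrans i').1, (htrans i').2.1⟩
      · intro i j
        refine Fin.cases ?_ (fun i' => ?_) i <;> refine Fin.cases ?_ (fun j' => ?_) j
        · intro hij; exact absurd rfl hij
        · intro _ v hv hvj
          exact (htrans j').2.2 v hvj hv
        · intro _ v hv
          exact (htrans i').2.2 v hv
        · intro hij v hv
          exact hdisj i' j' (fun h => hij (by rw [h])) v hv


end AugProof

/-- If `M` is a matching and `Mmax` a maximum matching, then the symmetric difference
`M Δ Mmax` contains at least `μ(G) − |M|` vertex-disjoint augmenting paths w.r.t. `M`. -/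
theorem stmt1 (G : SimpleGraph V) (M Mmax : Set (Sym2 V))
    (hM : IsMatching G M) (hMmax : IsMatching G Mmax) (hmax : Mmax.ncard = matchNum G) :
    ∃ (k : ℕ) (A : Fin k → (a : V) × (b : V) × G.Walk a b),
      matchNum G - M.ncard ≤ k ∧
      (∀ i, IsAugPath M (A i).2.2 ∧ ∀ e ∈ (A i).2.2.edges, e ∈ symmDiff M Mmax) ∧
      (∀ i j, i ≠ j → ∀ v ∈ (A i).2.2.support, v ∉ (A j).2.2.support) := by
  obtain ⟨k, A, hk, h2, h3⟩ := AugProof.main hMmax Mmax.ncard M hM (by omega)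
  exact ⟨k, A, by rw [← hmax]; exact hk, h2, h3⟩
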